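/- Let G be a complex Lie algebra with decomposition G = G₊ ⊕ G₀ ⊕ G₋, η : G₊ → ℂ a Lie algebra homomorphism, and V a G-module generated by a Whittaker vector of type η. Assume G₊ acts locally nilpotently on G/G₊. Then every nonzero G-submodule W of V contains a Whittaker vector of type η, i.e., a nonzero w' ∈ W with x·w' = η(x)w' for all x ∈ G₊. -/

import Mathlib

/-- Apply the operators `ad x` for `x` running through a list of elements of `G₊`. -/
def applyAds {G : Type*} [LieRing G] [LieAlgebra ℂ G] (Gp : LieSubalgebra ℂ G)
    (xs : List Gp) (y : G) : G :=
  xs.foldr (fun x z => ⁅(x : G), z⁆) y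

set_option linter.unusedSectionVars false

section AdsAux

variable {G : Type*} [LieRing G] [LieAlgebra ℂ G] (Gp : LieSubalgebra ℂ G)

lemma applyAds_append (xs ys : List Gp) (y : G) :
    applyAds Gp (xs ++ ys) y = applyAds Gp xs (applyAds Gp ys y) := by
  simp [applyAds, List.foldr_append]

lemma applyAds_mem_of_mem (xs : List Gp) {y : G} (hy : y ∈ Gp) : applyAds Gp xs y ∈ Gp := by
  induction xs with
  | nil => exact hy
  | cons x xs ih => exact Gp.lie_mem x.2 ih

lemma applyAds_mem_of_ge {y : G} {s : ℕ}
    (h : ∀ xs : List Gp, xs.length = s → applyAds Gp xs y ∈ Gp)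
    (xs : List Gp) (hlen : s ≤ xs.length) : applyAds Gp xs y ∈ Gp := by
  have hsplit : xs = xs.take (xs.length - s) ++ xs.drop (xs.length - s) :=
    (List.take_append_drop _ _).symm
  rw [hsplit, applyAds_append]
  apply applyAds_mem_of_mem
  apply h
  rw [List.length_drop]
  omega

end AdsAux

section Aux

variable {G V : Type*} [LieRing G] [LieAlgebra ℂ G]
    [AddCommGroup V] [Module ℂ V] [LieRingModule G V] [LieModule ℂ G V]

/-- The Whittaker-shifted action operator. -/
def Tl (Gp : LieSubalgebra ℂ G) (η : Gp →ₗ[ℂ] ℂ) (x : Gp) : Module.End ℂ V where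
  toFun w := ⁅(x : G), w⁆ - η x • w
  map_add' a b := by rw [lie_add, smul_add]; abel
  map_smul' c a := by
    simp only [lie_smul, smul_sub, RingHom.id_apply, smul_comm c (η x) a]

lemma Tl_apply (Gp : LieSubalgebra ℂ G) (η : Gp →ₗ[ℂ] ℂ) (x : Gp) (w : V) :
    Tl Gp η x w = ⁅(x : G), w⁆ - η x • w := rfl

/-- Iterated such operators: head applied first. -/
def Ts (Gp : LieSubalgebra ℂ G) (η : Gp →ₗ[ℂ] ℂ) : List Gp → Module.End ℂ V
  | [] => 1
  | x :: xs => Ts Gp η xs * Tl Gp η x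

lemma Ts_cons (Gp : LieSubalgebra ℂ G) (η : Gp →ₗ[ℂ] ℂ) (x : Gp) (xs : List Gp) (w : V) :
    Ts Gp η (x :: xs) w = Ts Gp η xs (Tl Gp η x w) := rfl

/-- The filtration of `V` by word length applied to `v`. -/
def Vfil (v : V) : ℕ → Submodule ℂ V
  | 0 => Submodule.span ℂ {v}
  | (n + 1) => Vfil v n ⊔ Submodule.span ℂ {w : V | ∃ (g : G) (u : V), u ∈ Vfil v n ∧ w = ⁅g, u⁆}

lemma Vfil_mono (v : V) : Monotone (Vfil (G := G) v) := by
  apply monotone_nat_of_le_succ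
  intro n
  exact le_sup_left

lemma lie_mem_Vfil (v : V) (g : G) (n : ℕ) {u : V} (hu : u ∈ Vfil (G := G) v n) :
    ⁅g, u⁆ ∈ Vfil (G := G) v (n + 1) := by
  show _ ∈ Vfil v n ⊔ _
  exact Submodule.mem_sup_right (Submodule.subset_span ⟨g, u, hu, rfl⟩)


variable (Gp : LieSubalgebra ℂ G) (η : Gp →ₗ[ℂ] ℂ) (v : V)
    (hv : ∀ x : Gp, ⁅(x : G), v⁆ = η x • v)

include hv

lemma Tl_zero_on_V0 (x : Gp) {u : V} (hu : u ∈ Vfil (G := G) v 0) : Tl Gp η x u = 0 := by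
  have hu' : u ∈ Submodule.span ℂ {v} := hu
  obtain ⟨c, rfl⟩ := Submodule.mem_span_singleton.mp hu'
  rw [map_smul, Tl_apply, hv x, sub_self, smul_zero]

lemma Tl_mem_Vfil (x : Gp) (n : ℕ) {u : V} (hu : u ∈ Vfil (G := G) v n) :
    Tl Gp η x u ∈ Vfil (G := G) v n := by
  induction n generalizing u with
  | zero => rw [Tl_zero_on_V0 Gp η v hv x hu]; exact Submodule.zero_mem _
  | succ n ih =>
    rcases Submodule.mem_sup.mp hu with ⟨a, ha, b, hb, rfl⟩
    rw [map_add]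
    refine Submodule.add_mem _ (Vfil_mono v (Nat.le_succ n) (ih ha)) ?_
    refine Submodule.span_induction ?_ ?_ ?_ ?_ hb
    · rintro w ⟨g, u, hu, rfl⟩
      have : Tl Gp η x ⁅g, u⁆ = ⁅⁅(x : G), g⁆, u⁆ + ⁅g, Tl Gp η x u⁆ := by
        rw [Tl_apply, Tl_apply, lie_sub, lie_smul, leibniz_lie]
        abel
      rw [this]
      exact Submodule.add_mem _ (lie_mem_Vfil v _ n hu) (lie_mem_Vfil v g n (ih hu))
    · rw [map_zero]; exact Submodule.zero_mem _
    · intro a b _ _ pa pb; rw [map_add]; exact Submodule.add_mem _ pa pb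
    · intro c a _ pa; rw [map_smul]; exact Submodule.smul_mem _ _ pa

lemma Ts_mem_Vfil (xs : List Gp) (n : ℕ) {u : V} (hu : u ∈ Vfil (G := G) v n) :
    Ts Gp η xs u ∈ Vfil (G := G) v n := by
  induction xs generalizing u with
  | nil => exact hu
  | cons x xs ih => rw [Ts_cons]; exact ih (Tl_mem_Vfil Gp η v hv x n hu)

lemma lie_Gp_mem_Vfil {y : G} (hy : y ∈ Gp) (n : ℕ) {u : V} (hu : u ∈ Vfil (G := G) v n) :
    ⁅y, u⁆ ∈ Vfil (G := G) v n := by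
  have : ⁅y, u⁆ = Tl Gp η ⟨y, hy⟩ u + η ⟨y, hy⟩ • u := by
    rw [Tl_apply]; abel
  rw [this]
  exact Submodule.add_mem _ (Tl_mem_Vfil Gp η v hv _ n hu) (Submodule.smul_mem _ _ hu)

/-- `Vfil` shifted down by one, with `⊥` at level `0`. -/
def Vprev (v : V) : ℕ → Submodule ℂ V
  | 0 => ⊥
  | (n + 1) => Vfil (G := G) v n

omit hv in
lemma lie_Vprev_mem_Vfil (g : G) (n : ℕ) {u : V} (hu : u ∈ Vprev (G := G) v n) :
    ⁅g, u⁆ ∈ Vfil (G := G) v n := by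
  cases n with
  | zero =>
    have : u = 0 := by simpa [Vprev] using hu
    simp [this]
  | succ n => exact lie_mem_Vfil v g n hu

lemma lemD (xs : List Gp) (s M : ℕ) (g : G) (u : V) (n : ℕ)
    (hu : u ∈ Vfil (G := G) v n)
    (hg : ∀ S : List Gp, s ≤ S.length → applyAds Gp S g ∈ Gp)
    (hM : ∀ S : List Gp, M ≤ S.length → Ts Gp η S u ∈ Vprev (G := G) v n)
    (hlen : s + M ≤ xs.length) :
    Ts Gp η xs ⁅g, u⁆ ∈ Vfil (G := G) v n := by
  induction xs generalizing s M g u with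
  | nil =>
    -- here s = 0 and M = 0
    have hs : s = 0 := by simp at hlen; omega
    have hgp : g ∈ Gp := by simpa [applyAds] using hg [] (by simp [hs])
    exact lie_Gp_mem_Vfil Gp η v hv hgp n hu
  | cons x xs ih =>
    rcases Nat.eq_zero_or_pos s with hs | hs
    · subst hs
      have hgp : g ∈ Gp := by simpa [applyAds] using hg [] le_rfl
      exact Ts_mem_Vfil Gp η v hv _ n (lie_Gp_mem_Vfil Gp η v hv hgp n hu)
    rcases Nat.eq_zero_or_pos M with hM0 | hM0
    · subst hM0
      have hup : u ∈ Vprev (G := G) v n := hM [] le_rfl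
      exact Ts_mem_Vfil Gp η v hv _ n (lie_Vprev_mem_Vfil v g n hup)
    -- both positive: expand one step
    have hexp : Tl Gp η x ⁅g, u⁆ = ⁅⁅(x : G), g⁆, u⁆ + ⁅g, Tl Gp η x u⁆ := by
      rw [Tl_apply, Tl_apply, lie_sub, lie_smul, leibniz_lie]
      abel
    rw [Ts_cons, hexp, map_add]
    apply Submodule.add_mem
    · refine ih (s - 1) M ⁅(x : G), g⁆ u hu ?_ hM ?_
      · intro S hS
        have : applyAds Gp (S ++ [x]) g ∈ Gp := by
          apply hg
          rw [List.length_append]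
          simp only [List.length_singleton]
          omega
        rwa [applyAds_append] at this
      · simp at hlen ⊢; omega
    · refine ih s (M - 1) g (Tl Gp η x u) (Tl_mem_Vfil Gp η v hv x n hu) hg ?_ ?_
      · intro S hS
        have : Ts Gp η (x :: S) u ∈ Vprev (G := G) v n := by
          apply hM
          simp only [List.length_cons]
          omega
        rwa [Ts_cons] at this
      · simp at hlen ⊢; omega

lemma lemC (hnil : ∀ y : G, ∃ s : ℕ, ∀ xs : List Gp, xs.length = s → applyAds Gp xs y ∈ Gp)
    (n : ℕ) {u : V} (hu : u ∈ Vfil (G := G) v n) :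
    ∃ N : ℕ, ∀ xs : List Gp, N ≤ xs.length → Ts Gp η xs u ∈ Vprev (G := G) v n := by
  induction n generalizing u with
  | zero =>
    refine ⟨1, fun xs hxs => ?_⟩
    match xs with
    | x :: xs =>
      rw [Ts_cons, Tl_zero_on_V0 Gp η v hv x hu, map_zero]
      exact Submodule.zero_mem _
  | succ n ih =>
    rcases Submodule.mem_sup.mp hu with ⟨a, ha, b, hb, rfl⟩
    have haN : ∃ N : ℕ, ∀ xs : List Gp, N ≤ xs.length →
        Ts Gp η xs a ∈ Vprev (G := G) v (n + 1) :=
      ⟨0, fun xs _ => Ts_mem_Vfil Gp η v hv xs n ha⟩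
    have hbN : ∃ N : ℕ, ∀ xs : List Gp, N ≤ xs.length →
        Ts Gp η xs b ∈ Vprev (G := G) v (n + 1) := by
      refine Submodule.span_induction ?_ ?_ ?_ ?_ hb
      · rintro w ⟨g, u', hu', rfl⟩
        obtain ⟨s, hs⟩ := hnil g
        obtain ⟨M, hMs⟩ := ih hu'
        exact ⟨s + M, fun xs hxs =>
          lemD Gp η v hv xs s M g u' n hu' (applyAds_mem_of_ge Gp hs) hMs hxs⟩
      · exact ⟨0, fun xs _ => by rw [map_zero]; exact Submodule.zero_mem _⟩
      · rintro a' b' _ _ ⟨Na, hNa⟩ ⟨Nb, hNb⟩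
        exact ⟨max Na Nb, fun xs hxs => by
          rw [map_add]
          exact Submodule.add_mem _ (hNa xs (le_trans (le_max_left _ _) hxs))
            (hNb xs (le_trans (le_max_right _ _) hxs))⟩
      · rintro c a' _ ⟨Na, hNa⟩
        exact ⟨Na, fun xs hxs => by
          rw [map_smul]; exact Submodule.smul_mem _ _ (hNa xs hxs)⟩
    obtain ⟨Na, hNa⟩ := haN
    obtain ⟨Nb, hNb⟩ := hbN
    exact ⟨max Na Nb, fun xs hxs => by
      rw [map_add]
      exact Submodule.add_mem _ (hNa xs (le_trans (le_max_left _ _) hxs))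
        (hNb xs (le_trans (le_max_right _ _) hxs))⟩

omit hv in
/-- The common descent step: either `w` is already a Whittaker vector, or we can apply
some `Tl x` to it, staying nonzero in `W` and decreasing the counter `N`. -/
lemma lemStep (W : LieSubmodule ℂ G V) (P : Submodule ℂ V) (N : ℕ)
    (ihN : ∀ w : V, w ∈ W → w ≠ 0 →
      (∀ xs : List Gp, N ≤ xs.length → Ts Gp η xs w ∈ P) →
      ∃ w' ∈ W, w' ≠ 0 ∧ ∀ x : Gp, ⁅(x : G), w'⁆ = η x • w')
    (w : V) (hw : w ∈ W) (hw0 : w ≠ 0)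
    (h : ∀ xs : List Gp, N + 1 ≤ xs.length → Ts Gp η xs w ∈ P) :
    ∃ w' ∈ W, w' ≠ 0 ∧ ∀ x : Gp, ⁅(x : G), w'⁆ = η x • w' := by
  by_cases hall : ∀ x : Gp, Tl Gp η x w = 0
  · refine ⟨w, hw, hw0, fun x => ?_⟩
    have := hall x
    rw [Tl_apply, sub_eq_zero] at this
    exact this
  · push_neg at hall
    obtain ⟨x, hx⟩ := hall
    refine ihN (Tl Gp η x w) ?_ hx (fun xs hxs => ?_)
    · rw [Tl_apply]
      exact W.sub_mem (W.lie_mem hw) (W.smul_mem _ hw)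
    · have := h (x :: xs) (by simp only [List.length_cons]; omega)
      rwa [Ts_cons] at this

lemma lemF (hnil : ∀ y : G, ∃ s : ℕ, ∀ xs : List Gp, xs.length = s → applyAds Gp xs y ∈ Gp)
    (W : LieSubmodule ℂ G V) :
    ∀ n N : ℕ, ∀ w : V, w ∈ W → w ≠ 0 →
      (∀ xs : List Gp, N ≤ xs.length → Ts Gp η xs w ∈ Vprev (G := G) v n) →
      ∃ w' ∈ W, w' ≠ 0 ∧ ∀ x : Gp, ⁅(x : G), w'⁆ = η x • w' := by
  intro n
  induction n with
  | zero =>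
    intro N
    induction N with
    | zero =>
      intro w hw hw0 h
      exfalso
      have : w ∈ (⊥ : Submodule ℂ V) := h [] le_rfl
      exact hw0 (by simpa using this)
    | succ N ihN => exact lemStep Gp η W _ N ihN
  | succ n ihn =>
    intro N
    induction N with
    | zero =>
      intro w hw hw0 h
      have hwV : w ∈ Vfil (G := G) v n := h [] le_rfl
      obtain ⟨N', hN'⟩ := lemC Gp η v hv hnil n hwV
      exact ihn N' w hw hw0 hN'
    | succ N ihN => exact lemStep Gp η W _ N ihN

end Aux



/-- every nonzero submodule of a Whittaker module contains a Whittaker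
vector of the same type. -/
theorem stmt1 {G V : Type*} [LieRing G] [LieAlgebra ℂ G]
    [AddCommGroup V] [Module ℂ V] [LieRingModule G V] [LieModule ℂ G V]
    (Gp G0 Gm : LieSubalgebra ℂ G)
    (hdecomp : ∀ g : G, ∃! t : Gp × G0 × Gm, g = (t.1 : G) + (t.2.1 : G) + (t.2.2 : G))
    (η : Gp →ₗ[ℂ] ℂ) (hη : ∀ x y : Gp, η ⁅x, y⁆ = 0)
    (v : V) (hv0 : v ≠ 0) (hv : ∀ x : Gp, ⁅(x : G), v⁆ = η x • v)
    (hgen : LieSubmodule.lieSpan ℂ G {v} = ⊤)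
    (hnil : ∀ y : G, ∃ s : ℕ, ∀ xs : List Gp, xs.length = s → applyAds Gp xs y ∈ Gp)
    (W : LieSubmodule ℂ G V) (hW : W ≠ ⊥) :
    ∃ w' ∈ W, w' ≠ 0 ∧ ∀ x : Gp, ⁅(x : G), w'⁆ = η x • w' := by
  -- pick a nonzero element of `W`
  have hW' : ∃ w ∈ W, w ≠ 0 := by
    by_contra h
    push_neg at h
    exact hW ((LieSubmodule.eq_bot_iff W).mpr h)
  obtain ⟨w, hwW, hw0⟩ := hW'
  have hdir : Directed (· ≤ ·) (Vfil (G := G) v) := (Vfil_mono v).directed_le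
  -- the filtration exhausts `V`
  let L : LieSubmodule ℂ G V :=
    { toSubmodule := ⨆ n, Vfil (G := G) v n
      lie_mem := by
        intro g m hm
        have hm' : m ∈ (⨆ n, Vfil (G := G) v n : Submodule ℂ V) := hm
        obtain ⟨n, hn⟩ := (Submodule.mem_iSup_of_directed _ hdir).mp hm'
        show ⁅g, m⁆ ∈ (⨆ n, Vfil (G := G) v n : Submodule ℂ V)
        exact Submodule.mem_iSup_of_mem (n + 1) (lie_mem_Vfil v g n hn) }
  have hvL : v ∈ L := by
    show v ∈ (⨆ n, Vfil (G := G) v n : Submodule ℂ V)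
    exact Submodule.mem_iSup_of_mem 0 (Submodule.mem_span_singleton_self v)
  have hle : LieSubmodule.lieSpan ℂ G {v} ≤ L :=
    LieSubmodule.lieSpan_le.mpr (Set.singleton_subset_iff.mpr hvL)
  rw [hgen] at hle
  have hwL : w ∈ (⨆ n, Vfil (G := G) v n : Submodule ℂ V) := hle (LieSubmodule.mem_top w)
  obtain ⟨n, hn⟩ := (Submodule.mem_iSup_of_directed _ hdir).mp hwL
  obtain ⟨N, hN⟩ := lemC Gp η v hv hnil n hn
  exact lemF Gp η v hv hnil W n N w hwW hw0 hN
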